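/- Let g = sl₂(ℂ). For all k ∈ ℕ and all μ', μ'' ∈ ℂ, the space of g-module homomorphisms Hom_g(M(μ'+μ''-2k), M(μ')⊗M(μ'')) is nonzero, where M(λ) denotes the Verma module of highest weight λ. -/

import Mathlib

open TensorProduct


section Aux

variable {L : Type*} [LieRing L] [LieAlgebra ℂ L] {e f h : L}
variable {M : Type*} [AddCommGroup M] [Module ℂ M] [LieRingModule L M] [LieModule ℂ L M]

lemma lie_finset_sum (x : L) {ι : Type*} (s : Finset ι) (g : ι → M) :
    ⁅x, ∑ i ∈ s, g i⁆ = ∑ i ∈ s, ⁅x, g i⁆ := by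
  rw [← LieModule.toEnd_apply_apply ℂ L M x, map_sum]
  simp [LieModule.toEnd_apply_apply]

lemma lie_h_pow (hhf : ⁅h, f⁆ = (-2 : ℂ) • f) {μ : ℂ} {v : M} (hv : ⁅h, v⁆ = μ • v) (n : ℕ) :
    ⁅h, ((LieModule.toEnd ℂ L M f) ^ n) v⁆ = (μ - 2 * n) • ((LieModule.toEnd ℂ L M f) ^ n) v := by
  induction n with
  | zero => simpa using hv
  | succ n ih =>
    have hp : ((LieModule.toEnd ℂ L M f) ^ (n + 1)) v
        = ⁅f, ((LieModule.toEnd ℂ L M f) ^ n) v⁆ := by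
      rw [pow_succ']
      simp [Module.End.mul_apply, LieModule.toEnd_apply_apply]
    rw [hp, leibniz_lie, hhf, smul_lie, ih, lie_smul]
    push_cast
    module

lemma lie_e_pow (hhf : ⁅h, f⁆ = (-2 : ℂ) • f) (hef : ⁅e, f⁆ = h) {μ : ℂ} {v : M}
    (hv0 : ⁅e, v⁆ = 0) (hvh : ⁅h, v⁆ = μ • v) (n : ℕ) :
    ⁅e, ((LieModule.toEnd ℂ L M f) ^ (n + 1)) v⁆
      = (((n : ℂ) + 1) * (μ - n)) • ((LieModule.toEnd ℂ L M f) ^ n) v := by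
  induction n with
  | zero =>
    have hp : ((LieModule.toEnd ℂ L M f) ^ (0 + 1)) v = ⁅f, v⁆ := by
      simp [LieModule.toEnd_apply_apply]
    rw [hp, leibniz_lie, hef, hv0, hvh]
    simp
  | succ n ih =>
    have hp : ((LieModule.toEnd ℂ L M f) ^ (n + 1 + 1)) v
        = ⁅f, ((LieModule.toEnd ℂ L M f) ^ (n + 1)) v⁆ := by
      rw [pow_succ']
      simp [Module.End.mul_apply, LieModule.toEnd_apply_apply]
    rw [hp, leibniz_lie, hef, ih, lie_smul, lie_h_pow hhf hvh]
    have hp2 : ⁅f, ((LieModule.toEnd ℂ L M f) ^ n) v⁆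
        = ((LieModule.toEnd ℂ L M f) ^ (n + 1)) v := by
      rw [pow_succ']
      simp [Module.End.mul_apply, LieModule.toEnd_apply_apply]
    rw [hp2]
    push_cast
    module

end Aux

/-- Existence of a nonzero solution of the two-term recurrence `c (i+1) * A i + c i * B i = 0`
supported on `{0, ..., k}`. -/
lemma coeff_exists (k : ℕ) (A B : ℕ → ℂ) :
    ∃ c : ℕ → ℂ, (∃ i₀, i₀ ≤ k ∧ c i₀ ≠ 0) ∧
      ∀ i < k, c (i + 1) * A i + c i * B i = 0 := by
  classical
  -- find a suitable starting index `s`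
  obtain ⟨s, hsk, hA, hs0⟩ :
      ∃ s, s ≤ k ∧ (∀ i, s ≤ i → i < k → A i ≠ 0) ∧ (∀ i, s = i + 1 → A i = 0) := by
    by_cases hz : ∃ i, i < k ∧ A i = 0
    · obtain ⟨m₀, hm₀k, hm₀⟩ := hz
      set P : ℕ → Prop := fun i => i < k ∧ A i = 0 with hP
      set m := Nat.findGreatest P k with hm
      have hPm : P m := Nat.findGreatest_spec (le_of_lt hm₀k) ⟨hm₀k, hm₀⟩
      refine ⟨m + 1, hPm.1, ?_, ?_⟩
      · intro i hi hik hAi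
        exact Nat.findGreatest_is_greatest hi (le_of_lt hik) ⟨hik, hAi⟩
      · intro i hi
        have : i = m := by omega
        rw [this]; exact hPm.2
    · push_neg at hz
      exact ⟨0, Nat.zero_le _, fun i _ hik => hz i hik, fun i hi => by omega⟩
  -- recursive solution starting from index `s`
  let d : ℕ → ℂ := fun j => Nat.rec 1 (fun j dj => -(dj * B (s + j)) / A (s + j)) j
  have hd0 : d 0 = 1 := rfl
  have hdsucc : ∀ j, d (j + 1) = -(d j * B (s + j)) / A (s + j) := fun j => rfl
  refine ⟨fun i => if i < s then 0 else d (i - s), ⟨s, hsk, ?_⟩, ?_⟩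
  · simp [hd0]
  · intro i hik
    rcases Nat.lt_trichotomy (i + 1) s with h1 | h1 | h1
    · have hi : i < s := by omega
      simp [if_pos h1, if_pos hi]
    · have hi : i < s := by omega
      have hAi : A i = 0 := hs0 i h1.symm
      simp [h1, if_pos hi, hAi]
    · have hsi : s ≤ i := by omega
      have h2 : ¬ (i + 1 < s) := by omega
      have h3 : ¬ (i < s) := by omega
      have h4 : i + 1 - s = (i - s) + 1 := by omega
      have h5 : s + (i - s) = i := by omega
      show (if i + 1 < s then (0:ℂ) else d (i + 1 - s)) * A i + (if i < s then 0 else d (i - s)) * B i = 0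
      rw [if_neg h2, if_neg h3, h4, hdsucc, h5, div_mul_cancel₀ _ (hA i hsi hik)]
      ring
/-- A module `M` over a Lie algebra containing an `sl₂`-triple `e, f, h` is the Verma
module of highest weight `μ` with highest weight vector `v` if `e⬝v = 0`, `h⬝v = μ•v`,
and the vectors `f^k·v` (`k ∈ ℕ`) form a basis of `M`. -/
structure IsSl2Verma {L : Type*} [LieRing L] [LieAlgebra ℂ L] (e f h : L)
    (M : Type*) [AddCommGroup M] [Module ℂ M] [LieRingModule L M] [LieModule ℂ L M]
    (μ : ℂ) (v : M) : Prop where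
  lie_e : ⁅e, v⁆ = 0
  lie_h : ⁅h, v⁆ = μ • v
  indep : LinearIndependent ℂ fun k : ℕ => ((LieModule.toEnd ℂ L M f) ^ k) v
  spans : Submodule.span ℂ (Set.range fun k : ℕ => ((LieModule.toEnd ℂ L M f) ^ k) v) = ⊤

/-- Let `g = sl₂(ℂ)` (spanned by an `sl₂`-triple `e, f, h`). For all `k ∈ ℕ` and
`μ', μ'' ∈ ℂ`, the space `Hom_g(M(μ'+μ''-2k), M(μ')⊗M(μ''))` of `g`-module homomorphisms
is nonzero, where `M(λ)` denotes the Verma module of highest weight `λ` and the tensor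
product carries the diagonal `g`-action. -/
theorem hom_verma_tensor_nonzero (L : Type*) [LieRing L] [LieAlgebra ℂ L]
    (e f h : L)
    (hhe : ⁅h, e⁆ = (2 : ℂ) • e) (hhf : ⁅h, f⁆ = (-2 : ℂ) • f) (hef : ⁅e, f⁆ = h)
    (hspan : Submodule.span ℂ ({e, f, h} : Set L) = ⊤)
    (μ' μ'' : ℂ) (k : ℕ)
    (M' : Type*) [AddCommGroup M'] [Module ℂ M'] [LieRingModule L M'] [LieModule ℂ L M']
    (M'' : Type*) [AddCommGroup M''] [Module ℂ M''] [LieRingModule L M''] [LieModule ℂ L M'']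
    (N : Type*) [AddCommGroup N] [Module ℂ N] [LieRingModule L N] [LieModule ℂ L N]
    (v' : M') (v'' : M'') (w : N)
    (hV' : IsSl2Verma e f h M' μ' v') (hV'' : IsSl2Verma e f h M'' μ'' v'')
    (hN : IsSl2Verma e f h N (μ' + μ'' - 2 * k) w) :
    ∃ φ : N →ₗ⁅ℂ,L⁆ M' ⊗[ℂ] M'', φ ≠ 0 := by
  classical
  obtain ⟨c, ⟨i₀, hi₀k, hc₀⟩, hrec⟩ := coeff_exists k
    (fun i => ((i : ℂ) + 1) * (μ' - i))
    (fun i => (((k - (i + 1) : ℕ) : ℂ) + 1) * (μ'' - ((k - (i + 1) : ℕ) : ℂ)))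
  -- the candidate singular vector
  set u : M' ⊗[ℂ] M'' := ∑ i ∈ Finset.range (k + 1),
    c i • (((LieModule.toEnd ℂ L M' f ^ i) v') ⊗ₜ[ℂ] ((LieModule.toEnd ℂ L M'' f ^ (k - i)) v''))
    with hu
  -- `u` has weight `ν`
  have hu_h : ⁅h, u⁆ = (μ' + μ'' - 2 * k) • u := by
    rw [hu, lie_finset_sum, Finset.smul_sum]
    refine Finset.sum_congr rfl fun i hi => ?_
    have hik : i ≤ k := Nat.lt_succ_iff.mp (Finset.mem_range.mp hi)
    rw [lie_smul, TensorProduct.LieModule.lie_tmul_right,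
      lie_h_pow hhf hV'.lie_h, lie_h_pow hhf hV''.lie_h]
    simp only [smul_tmul', tmul_smul, smul_add, smul_smul]
    have hcast : ((k - i : ℕ) : ℂ) = (k : ℂ) - (i : ℂ) := by
      push_cast [hik]; ring
    have hsc : c i * (μ' - 2 * i) + c i * (μ'' - 2 * ((k - i : ℕ) : ℂ))
        = (μ' + μ'' - 2 * k) * c i := by
      rw [hcast]; ring
    rw [← add_tmul, ← add_smul, hsc]
  -- `u` is a singular vector
  have hu_e : ⁅e, u⁆ = 0 := by
    rw [hu, lie_finset_sum]
    have hterm : ∀ i ∈ Finset.range (k + 1),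
        ⁅e, c i • (((LieModule.toEnd ℂ L M' f ^ i) v')
            ⊗ₜ[ℂ] ((LieModule.toEnd ℂ L M'' f ^ (k - i)) v''))⁆
        = c i • (⁅e, (LieModule.toEnd ℂ L M' f ^ i) v'⁆
              ⊗ₜ[ℂ] ((LieModule.toEnd ℂ L M'' f ^ (k - i)) v''))
          + c i • (((LieModule.toEnd ℂ L M' f ^ i) v')
              ⊗ₜ[ℂ] ⁅e, (LieModule.toEnd ℂ L M'' f ^ (k - i)) v''⁆) := by
      intro i hi
      rw [lie_smul, TensorProduct.LieModule.lie_tmul_right, smul_add]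
    rw [Finset.sum_congr rfl hterm, Finset.sum_add_distrib]
    have hS1 : ∑ i ∈ Finset.range (k + 1),
        c i • (⁅e, (LieModule.toEnd ℂ L M' f ^ i) v'⁆
            ⊗ₜ[ℂ] ((LieModule.toEnd ℂ L M'' f ^ (k - i)) v''))
        = ∑ i ∈ Finset.range k, (c (i + 1) * (((i : ℂ) + 1) * (μ' - i))) •
            (((LieModule.toEnd ℂ L M' f ^ i) v')
              ⊗ₜ[ℂ] ((LieModule.toEnd ℂ L M'' f ^ (k - (i + 1))) v'')) := by
      rw [Finset.sum_range_succ']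
      have h0 : c 0 • (⁅e, (LieModule.toEnd ℂ L M' f ^ 0) v'⁆
          ⊗ₜ[ℂ] ((LieModule.toEnd ℂ L M'' f ^ (k - 0)) v'')) = 0 := by
        simp [hV'.lie_e]
      rw [h0, add_zero]
      refine Finset.sum_congr rfl fun i hi => ?_
      rw [lie_e_pow hhf hef hV'.lie_e hV'.lie_h, smul_tmul', smul_smul, ← smul_tmul',
        smul_tmul']
    have hS2 : ∑ i ∈ Finset.range (k + 1),
        c i • (((LieModule.toEnd ℂ L M' f ^ i) v')
            ⊗ₜ[ℂ] ⁅e, (LieModule.toEnd ℂ L M'' f ^ (k - i)) v''⁆)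
        = ∑ i ∈ Finset.range k,
            (c i * ((((k - (i + 1) : ℕ) : ℂ) + 1) * (μ'' - ((k - (i + 1) : ℕ) : ℂ)))) •
            (((LieModule.toEnd ℂ L M' f ^ i) v')
              ⊗ₜ[ℂ] ((LieModule.toEnd ℂ L M'' f ^ (k - (i + 1))) v'')) := by
      rw [Finset.sum_range_succ]
      have h0 : c k • (((LieModule.toEnd ℂ L M' f ^ k) v')
          ⊗ₜ[ℂ] ⁅e, (LieModule.toEnd ℂ L M'' f ^ (k - k)) v''⁆) = 0 := by
        simp [hV''.lie_e]
      rw [h0, add_zero]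
      refine Finset.sum_congr rfl fun i hi => ?_
      have hki : k - i = (k - (i + 1)) + 1 := by
        have := Finset.mem_range.mp hi; omega
      rw [hki, lie_e_pow hhf hef hV''.lie_e hV''.lie_h, tmul_smul, smul_smul]
    rw [hS1, hS2, ← Finset.sum_add_distrib]
    refine Finset.sum_eq_zero fun i hi => ?_
    rw [← add_smul, hrec i (Finset.mem_range.mp hi), zero_smul]
  -- `u ≠ 0`
  have hu_ne : u ≠ 0 := by
    let b' : Module.Basis ℕ ℂ M' := Module.Basis.mk hV'.indep hV'.spans.ge
    let b'' : Module.Basis ℕ ℂ M'' := Module.Basis.mk hV''.indep hV''.spans.ge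
    let bT : Module.Basis (ℕ × ℕ) ℂ (M' ⊗[ℂ] M'') := Module.Basis.tensorProduct b' b''
    have hrepr : (bT.repr u) (i₀, k - i₀) = c i₀ := by
      rw [hu, map_sum]
      have hterm : ∀ i ∈ Finset.range (k + 1),
          bT.repr (c i • (((LieModule.toEnd ℂ L M' f ^ i) v')
              ⊗ₜ[ℂ] ((LieModule.toEnd ℂ L M'' f ^ (k - i)) v'')))
          = Finsupp.single (i, k - i) (c i) := by
        intro i hi
        have hb : ((LieModule.toEnd ℂ L M' f ^ i) v')
            ⊗ₜ[ℂ] ((LieModule.toEnd ℂ L M'' f ^ (k - i)) v'') = bT (i, k - i) := by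
          rw [Module.Basis.tensorProduct_apply, Module.Basis.mk_apply, Module.Basis.mk_apply]
        rw [map_smul, hb, Module.Basis.repr_self, Finsupp.smul_single, smul_eq_mul, mul_one]
      rw [Finset.sum_congr rfl hterm, Finsupp.finset_sum_apply]
      rw [Finset.sum_eq_single_of_mem i₀ (Finset.mem_range.mpr (by omega))]
      · rw [Finsupp.single_eq_same]
      · intro i hi hne
        simp [Finsupp.single_apply, Prod.ext_iff, hne]
    intro h0
    rw [h0, map_zero] at hrepr
    exact hc₀ (by simpa using hrepr.symm)
  -- construct the homomorphism
  let bN : Module.Basis ℕ ℂ N := Module.Basis.mk hN.indep hN.spans.ge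
  let φ₀ : N →ₗ[ℂ] M' ⊗[ℂ] M'' :=
    bN.constr ℂ (fun n => (LieModule.toEnd ℂ L (M' ⊗[ℂ] M'') f ^ n) u)
  have hφ₀ : ∀ n : ℕ, φ₀ ((LieModule.toEnd ℂ L N f ^ n) w)
      = (LieModule.toEnd ℂ L (M' ⊗[ℂ] M'') f ^ n) u := by
    intro n
    have hb : (LieModule.toEnd ℂ L N f ^ n) w = bN n :=
      (Module.Basis.mk_apply hN.indep hN.spans.ge n).symm
    rw [hb]
    exact Module.Basis.constr_basis bN ℂ _ n
  have reduce : ∀ x : L,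
      (∀ n : ℕ, φ₀ ⁅x, (LieModule.toEnd ℂ L N f ^ n) w⁆
        = ⁅x, φ₀ ((LieModule.toEnd ℂ L N f ^ n) w)⁆) →
      ∀ m : N, φ₀ ⁅x, m⁆ = ⁅x, φ₀ m⁆ := by
    intro x hx m
    let S : Submodule ℂ N :=
      { carrier := {m | φ₀ ⁅x, m⁆ = ⁅x, φ₀ m⁆}
        add_mem' := by
          intro a b ha hb
          simp only [Set.mem_setOf_eq] at *
          rw [lie_add, map_add, map_add, lie_add, ha, hb]
        zero_mem' := by simp
        smul_mem' := by
          intro r a ha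
          simp only [Set.mem_setOf_eq] at *
          rw [lie_smul, map_smul, map_smul, lie_smul, ha] }
    have hle : Submodule.span ℂ
        (Set.range fun n : ℕ => (LieModule.toEnd ℂ L N f ^ n) w) ≤ S :=
      Submodule.span_le.mpr (by rintro _ ⟨n, rfl⟩; exact hx n)
    rw [hN.spans] at hle
    exact hle Submodule.mem_top
  have hf_case : ∀ m : N, φ₀ ⁅f, m⁆ = ⁅f, φ₀ m⁆ := by
    refine reduce f fun n => ?_
    have h1 : ⁅f, (LieModule.toEnd ℂ L N f ^ n) w⁆
        = (LieModule.toEnd ℂ L N f ^ (n + 1)) w := by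
      rw [pow_succ']; simp [Module.End.mul_apply, LieModule.toEnd_apply_apply]
    have h2 : ⁅f, (LieModule.toEnd ℂ L (M' ⊗[ℂ] M'') f ^ n) u⁆
        = (LieModule.toEnd ℂ L (M' ⊗[ℂ] M'') f ^ (n + 1)) u := by
      rw [pow_succ']; simp [Module.End.mul_apply, LieModule.toEnd_apply_apply]
    rw [h1, hφ₀, hφ₀, h2]
  have hh_case : ∀ m : N, φ₀ ⁅h, m⁆ = ⁅h, φ₀ m⁆ := by
    refine reduce h fun n => ?_
    rw [lie_h_pow hhf hN.lie_h, map_smul, hφ₀, lie_h_pow hhf hu_h]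
  have he_case : ∀ m : N, φ₀ ⁅e, m⁆ = ⁅e, φ₀ m⁆ := by
    refine reduce e fun n => ?_
    cases n with
    | zero =>
      simp only [pow_zero, Module.End.one_apply]
      rw [hN.lie_e, map_zero]
      have hw : φ₀ w = u := by simpa using hφ₀ 0
      rw [hw, hu_e]
    | succ n =>
      rw [lie_e_pow hhf hef hN.lie_e hN.lie_h, map_smul, hφ₀ n, hφ₀ (n + 1),
        lie_e_pow hhf hef hu_e hu_h]
  have hall : ∀ (x : L) (m : N), φ₀ ⁅x, m⁆ = ⁅x, φ₀ m⁆ := by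
    intro x
    let S : Submodule ℂ L :=
      { carrier := {x | ∀ m : N, φ₀ ⁅x, m⁆ = ⁅x, φ₀ m⁆}
        add_mem' := by
          intro a b ha hb m
          rw [add_lie, map_add, ha, hb, add_lie]
        zero_mem' := by intro m; rw [zero_lie, map_zero, zero_lie]
        smul_mem' := by
          intro r a ha m
          rw [smul_lie, map_smul, ha, smul_lie] }
    have hsub : ({e, f, h} : Set L) ⊆ S := by
      rintro x (rfl | rfl | rfl)
      · exact he_case
      · exact hf_case
      · exact hh_case
    have hle : Submodule.span ℂ ({e, f, h} : Set L) ≤ S := Submodule.span_le.mpr hsub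
    rw [hspan] at hle
    exact hle Submodule.mem_top
  refine ⟨{ toLinearMap := φ₀, map_lie' := fun {x m} => hall x m }, ?_⟩
  intro hzero
  apply hu_ne
  have hw : φ₀ w = u := by simpa using hφ₀ 0
  rw [← hw]
  have := congrArg (fun ψ : N →ₗ⁅ℂ,L⁆ M' ⊗[ℂ] M'' => ψ w) hzero
  simpa using this
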